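/- arXiv:1206.4195 — 3 statements merged into one kernel-verified Lean document; each statement's English description precedes it below -/
import Mathlib

section
/- Suppose Σ_{k=1}^∞ α_k(1−α_k) = ∞ and the sequence of iterates (x_k) is bounded. Then there exists x̄ ∈ C with T x̄ = x̄ such that x_k converges weakly to x̄. -/
open Filter Topology

section KMAux

variable {H : Type*} [NormedAddCommGroup H] [InnerProductSpace ℝ H]

lemma km_combo_sq (a b : H) (t : ℝ) :
    ‖(1 - t) • a + t • b‖^2 = (1-t)*‖a‖^2 + t*‖b‖^2 - t*(1-t)*‖a-b‖^2 := by
  have e1 : ‖(1 - t) • a + t • b‖^2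
      = ‖(1-t)•a‖^2 + 2 * inner ℝ ((1-t)•a) (t•b) + ‖t•b‖^2 := norm_add_sq_real _ _
  have e2 : ‖a - b‖^2 = ‖a‖^2 - 2 * inner ℝ a b + ‖b‖^2 := norm_sub_sq_real _ _
  have e3 : ‖(1-t)•a‖^2 = (1-t)^2 * ‖a‖^2 := by
    rw [norm_smul, mul_pow, Real.norm_eq_abs, sq_abs]
  have e4 : ‖t•b‖^2 = t^2 * ‖b‖^2 := by
    rw [norm_smul, mul_pow, Real.norm_eq_abs, sq_abs]
  have e5 : (inner ℝ ((1-t)•a) (t•b) : ℝ) = (1-t)*t*inner ℝ a b := by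
    rw [real_inner_smul_left, real_inner_smul_right]; ring
  rw [e1, e3, e4, e5, e2]; ring

lemma km_parallel (u z w : H) :
    ‖u - (1/2:ℝ) • (z + w)‖^2 = (1/2)*‖u-z‖^2 + (1/2)*‖u-w‖^2 - (1/4)*‖z-w‖^2 := by
  have h := km_combo_sq (u - z) (u - w) (1/2)
  have h2 : (1 - (1/2:ℝ)) • (u - z) + (1/2:ℝ) • (u - w) = u - (1/2:ℝ) • (z + w) := by
    have : (1 - (1/2:ℝ)) = (1/2:ℝ) := by norm_num
    rw [this, smul_sub, smul_sub, smul_add, ← sub_sub]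
    module
  have h3 : (u - z) - (u - w) = w - z := by abel
  rw [h2, h3] at h
  rw [h, ← neg_sub z w, norm_neg]; ring

end KMAux

lemma km_limsup_comb {u v w : ℕ → ℝ} {a b c : ℝ} (ha : 0 ≤ a) (hb : 0 ≤ b)
    (h : ∀ k, w k ≤ a * u k + b * v k + c)
    {Bu Bv Bw : ℝ} (huB : ∀ k, |u k| ≤ Bu) (hvB : ∀ k, |v k| ≤ Bv) (hwB : ∀ k, |w k| ≤ Bw) :
    limsup w atTop ≤ a * limsup u atTop + b * limsup v atTop + c := by
  refine le_of_forall_pos_le_add ?_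
  intro ε hε
  have hεu : (0:ℝ) < ε/(2*(a+1)) := by positivity
  have hεv : (0:ℝ) < ε/(2*(b+1)) := by positivity
  have hu_bdd : IsBoundedUnder (· ≤ ·) atTop u :=
    isBoundedUnder_of ⟨Bu, fun k => (abs_le.1 (huB k)).2⟩
  have hv_bdd : IsBoundedUnder (· ≤ ·) atTop v :=
    isBoundedUnder_of ⟨Bv, fun k => (abs_le.1 (hvB k)).2⟩
  have hw_cob : IsCoboundedUnder (· ≤ ·) atTop w :=
    (isBoundedUnder_of ⟨-Bw, fun k => neg_le_of_abs_le (hwB k)⟩ :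
      IsBoundedUnder (· ≥ ·) atTop w).isCoboundedUnder_le
  have hu_ev : ∀ᶠ k in atTop, u k < limsup u atTop + ε/(2*(a+1)) :=
    eventually_lt_of_limsup_lt (by linarith) hu_bdd
  have hv_ev : ∀ᶠ k in atTop, v k < limsup v atTop + ε/(2*(b+1)) :=
    eventually_lt_of_limsup_lt (by linarith) hv_bdd
  have hev : ∀ᶠ k in atTop,
      w k ≤ a * limsup u atTop + b * limsup v atTop + c + ε := by
    filter_upwards [hu_ev, hv_ev] with k h1 h2
    have e3 : a * (ε/(2*(a+1))) ≤ ε/2 := by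
      rw [mul_div_assoc', div_le_div_iff₀ (by linarith) (by norm_num)]
      nlinarith
    have e4 : b * (ε/(2*(b+1))) ≤ ε/2 := by
      rw [mul_div_assoc', div_le_div_iff₀ (by linarith) (by norm_num)]
      nlinarith
    have := h k
    nlinarith [mul_le_mul_of_nonneg_left (le_of_lt h1) ha,
      mul_le_mul_of_nonneg_left (le_of_lt h2) hb]
  exact limsup_le_of_le hw_cob hev

lemma km_sum_shift (f : ℕ → ℝ) (n : ℕ) :
    ∑ k ∈ Finset.Icc 1 n, f k = ∑ k ∈ Finset.range n, f (k+1) := by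
  induction n with
  | zero => simp
  | succ n ih => rw [Finset.sum_Icc_succ_top (by omega), Finset.sum_range_succ, ih]

lemma km_KI {b c βa : ℕ → ℝ} {B : ℝ}
    (hβ : ∀ k, βa k ∈ Set.Icc (0:ℝ) 1)
    (hbB : ∀ k, |b k| ≤ B) (hcB : ∀ k, |c k| ≤ B)
    (hrec : ∀ k, b (k+1) ≤ (1 - βa (k+1)) * b k + βa (k+1) * c k)
    (hdivR : Tendsto (fun n => ∑ k ∈ Finset.range n, βa (k+1) * (1 - βa (k+1))) atTop atTop) :
    limsup b atTop ≤ limsup c atTop := by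
  by_contra hlt
  push_neg at hlt
  set L := limsup b atTop with hLdef
  set Rc := limsup c atTop with hRcdef
  set R := (Rc + L)/2 with hRdef
  have hRltL : R < L := by rw [hRdef]; linarith
  have hRcR : Rc < R := by rw [hRdef]; linarith
  have hcob : IsCoboundedUnder (· ≤ ·) atTop b :=
    (isBoundedUnder_of ⟨-B, fun k => neg_le_of_abs_le (hbB k)⟩ :
      IsBoundedUnder (· ≥ ·) atTop b).isCoboundedUnder_le
  have hev : ∀ᶠ k in atTop, c k < R :=
    eventually_lt_of_limsup_lt hRcR (isBoundedUnder_of ⟨B, fun k => (abs_le.1 (hcB k)).2⟩)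
  obtain ⟨m, hm⟩ := eventually_atTop.1 hev
  by_cases hcase : ∃ k0, m ≤ k0 ∧ b k0 ≤ R
  · obtain ⟨k0, hk0m, hk0⟩ := hcase
    have hall : ∀ j, k0 ≤ j → b j ≤ R := by
      intro j hj
      induction j, hj using Nat.le_induction with
      | base => exact hk0
      | succ n hn ih =>
        have h1 := hrec n
        have hβ1 := hβ (n+1)
        have h2 := le_of_lt (hm n (le_trans hk0m hn))
        nlinarith [hβ1.1, hβ1.2]
    have : L ≤ R := limsup_le_of_le hcob (eventually_atTop.2 ⟨k0, hall⟩)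
    linarith
  · push_neg at hcase
    have hmono : ∀ k, m ≤ k → b (k+1) ≤ b k := by
      intro k hk
      have h1 := hrec k
      have hβ1 := hβ (k+1)
      have h2 := le_of_lt (hm k hk)
      have h3 := (hcase k hk).le
      nlinarith [hβ1.1, hβ1.2]
    have hge : ∀ k, m ≤ k → ∀ j, k ≤ j → b j ≤ b k := by
      intro k hk j hj
      induction j, hj using Nat.le_induction with
      | base => exact le_refl _
      | succ n hn ih => exact le_trans (hmono n (le_trans hk hn)) ih
    have hLle : ∀ k, m ≤ k → L ≤ b k := fun k hk =>
      limsup_le_of_le hcob (eventually_atTop.2 ⟨k, hge k hk⟩)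
    have hstep : ∀ k, m ≤ k → βa (k+1) * (1 - βa (k+1)) * (L - R) ≤ b k - b (k+1) := by
      intro k hk
      have h1 := hrec k
      have hβ1 := hβ (k+1)
      have h2 := hLle k hk
      have h3 := le_of_lt (hm k hk)
      have h4 := hcase k hk
      have e1 : βa (k+1)*(b k - c k) ≤ b k - b (k+1) := by nlinarith [h1]
      have e2 : βa (k+1)*(b k - R) ≤ βa (k+1)*(b k - c k) :=
        mul_le_mul_of_nonneg_left (by linarith) hβ1.1
      have e3 : βa (k+1)*(1-βa (k+1))*(b k - R) ≤ βa (k+1)*(b k - R) := by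
        nlinarith [mul_nonneg (mul_nonneg hβ1.1 hβ1.1) (by linarith : (0:ℝ) ≤ b k - R)]
      have e4 : βa (k+1)*(1-βa (k+1))*(L-R) ≤ βa (k+1)*(1-βa (k+1))*(b k - R) :=
        mul_le_mul_of_nonneg_left (by linarith) (mul_nonneg hβ1.1 (by linarith [hβ1.2]))
      linarith
    have hsum : ∀ n, m ≤ n →
        (L - R) * (∑ k ∈ Finset.Ico m n, βa (k+1) * (1 - βa (k+1))) ≤ b m - b n := by
      intro n hn
      induction n, hn using Nat.le_induction with
      | base => simp
      | succ n hn ih =>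
        rw [Finset.sum_Ico_succ_top hn, mul_add]
        have h2 : (L - R) * (βa (n+1) * (1 - βa (n+1))) ≤ b n - b (n+1) := by
          rw [mul_comm]; exact hstep n hn
        linarith
    have hub : ∀ n, m ≤ n →
        (∑ k ∈ Finset.Ico m n, βa (k+1) * (1 - βa (k+1))) ≤ (2*B)/(L-R) := by
      intro n hn
      have h1 := hsum n hn
      have h2 := (abs_le.1 (hbB m)).2
      have h3 := neg_le_of_abs_le (hbB n)
      rw [le_div_iff₀ (by linarith : (0:ℝ) < L - R)]
      nlinarith [h1]
    obtain ⟨n, hn1, hn2⟩ := (((tendsto_atTop.1 hdivR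
      ((∑ k ∈ Finset.range m, βa (k+1) * (1 - βa (k+1))) + (2*B)/(L-R) + 1))).and
      (eventually_ge_atTop m)).exists
    have := hub n hn2
    rw [Finset.sum_Ico_eq_sub _ hn2] at this
    linarith

set_option maxHeartbeats 1000000 in
/-- In a Hilbert space, if `Σ_{k≥1} α_k(1−α_k) = ∞` and the Krasnosel'skii–Mann
iterates are bounded, then they converge weakly to a fixed point of `T`. -/
theorem km_weak_convergence
    {H : Type*} [NormedAddCommGroup H] [InnerProductSpace ℝ H] [CompleteSpace H]
    (C : Set H) (hCne : C.Nonempty) (hCclosed : IsClosed C) (hCconv : Convex ℝ C)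
    (T : H → H) (hTmaps : Set.MapsTo T C C)
    (hT : ∀ x ∈ C, ∀ y ∈ C, ‖T x - T y‖ ≤ ‖x - y‖)
    (α : ℕ → ℝ) (hα : ∀ k, α k ∈ Set.Icc (0:ℝ) 1)
    (x : ℕ → H) (hx0 : x 0 ∈ C)
    (hx : ∀ k, x (k + 1) = (1 - α (k + 1)) • x k + α (k + 1) • T (x k))
    (hdiv : Filter.Tendsto (fun n => ∑ k ∈ Finset.Icc 1 n, α k * (1 - α k))
      Filter.atTop Filter.atTop)
    (hbdd : Bornology.IsBounded (Set.range x)) :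
    ∃ y ∈ C, T y = y ∧ ∀ v : H,
      Filter.Tendsto (fun k => (inner ℝ (x k) v : ℝ)) Filter.atTop (nhds (inner ℝ y v)) := by
  classical
  obtain ⟨M, hM⟩ : ∃ M : ℝ, ∀ k, ‖x k‖ ≤ M := by
    obtain ⟨B, hB⟩ := isBounded_iff_forall_norm_le.1 hbdd
    exact ⟨B, fun k => hB _ (Set.mem_range_self k)⟩
  have hM0 : (0:ℝ) ≤ M := le_trans (norm_nonneg _) (hM 0)
  have hdivR : Tendsto (fun n => ∑ k ∈ Finset.range n, α (k+1) * (1 - α (k+1)))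
      atTop atTop := by
    have he : (fun n => ∑ k ∈ Finset.Icc 1 n, α k * (1 - α k))
        = fun n => ∑ k ∈ Finset.range n, α (k+1) * (1 - α (k+1)) :=
      funext fun n => km_sum_shift _ n
    rw [← he]; exact hdiv
  have hxC : ∀ k, x k ∈ C := by
    intro k; induction k with
    | zero => exact hx0
    | succ k ih =>
      rw [hx k]
      exact hCconv ih (hTmaps ih) (by linarith [(hα (k+1)).2]) (hα (k+1)).1 (by ring)
  have hrecsq : ∀ (k : ℕ) (z : H), ‖x (k+1) - z‖^2
      = (1 - α (k+1)) * ‖x k - z‖^2 + α (k+1) * ‖T (x k) - z‖^2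
        - α (k+1)*(1 - α (k+1))*‖x k - T (x k)‖^2 := by
    intro k z
    have h1 : x (k+1) - z = (1 - α (k+1)) • (x k - z) + α (k+1) • (T (x k) - z) := by
      rw [hx k]; module
    have h2 : (x k - z) - (T (x k) - z) = x k - T (x k) := by abel
    rw [h1, km_combo_sq, h2]
  -- bound on distances
  have hxzB : ∀ (z : H) (k : ℕ), ‖x k - z‖ ≤ M + ‖z‖ := fun z k =>
    le_trans (norm_sub_le _ _) (by linarith [hM k])
  have hxzB2 : ∀ (z : H) (k : ℕ), |‖x k - z‖^2| ≤ (M + ‖z‖)^2 := by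
    intro z k
    rw [abs_of_nonneg (sq_nonneg _)]
    exact pow_le_pow_left₀ (norm_nonneg _) (hxzB z k) 2
  -- the asymptotic-center functional
  set F : H → ℝ := fun z => limsup (fun k => ‖x k - z‖^2) atTop with hFdef
  have hF_nonneg : ∀ z, 0 ≤ F z := by
    intro z
    exact le_limsup_of_frequently_le
      ((Filter.Eventually.of_forall (fun k => sq_nonneg (‖x k - z‖))).frequently)
      (isBoundedUnder_of ⟨(M + ‖z‖)^2, fun k => (abs_le.1 (hxzB2 z k)).2⟩)
  have hFT : ∀ z ∈ C, F (T z) ≤ F z := by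
    intro z hz
    refine km_KI (B := (M + ‖T z‖)^2 + (M + ‖z‖)^2) hα ?_ ?_ ?_ hdivR
    · intro k
      exact le_trans (hxzB2 (T z) k) (le_add_of_nonneg_right (sq_nonneg _))
    · intro k
      exact le_trans (hxzB2 z k) (le_add_of_nonneg_left (sq_nonneg _))
    · intro k
      have h1 := hrecsq k (T z)
      have h2 : ‖T (x k) - T z‖^2 ≤ ‖x k - z‖^2 :=
        pow_le_pow_left₀ (norm_nonneg _) (hT _ (hxC k) _ hz) 2
      have h3 : 0 ≤ α (k+1)*(1-α (k+1))*‖x k - T (x k)‖^2 :=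
        mul_nonneg (mul_nonneg (hα (k+1)).1 (by linarith [(hα (k+1)).2])) (sq_nonneg _)
      have h4 := mul_le_mul_of_nonneg_left h2 (hα (k+1)).1
      linarith
  have hSC : ∀ z w : H, F ((1/2:ℝ)•(z+w)) ≤ (1/2)*F z + (1/2)*F w - (1/4)*‖z-w‖^2 := by
    intro z w
    have h := km_limsup_comb (a := 1/2) (b := 1/2) (c := -((1/4)*‖z-w‖^2))
      (u := fun k => ‖x k - z‖^2) (v := fun k => ‖x k - w‖^2)
      (w := fun k => ‖x k - (1/2:ℝ)•(z+w)‖^2) (by norm_num) (by norm_num)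
      (fun k => le_of_eq (by rw [km_parallel]; ring))
      (hxzB2 z) (hxzB2 w) (hxzB2 _)
    calc F ((1/2:ℝ)•(z+w)) ≤ (1/2)*F z + (1/2)*F w + -((1/4)*‖z-w‖^2) := h
      _ = (1/2)*F z + (1/2)*F w - (1/4)*‖z-w‖^2 := by ring
  have hFlip : ∀ z w : H, F z ≤ F w + (2*(M+‖w‖) + ‖z-w‖)*‖z-w‖ := by
    intro z w
    have hpw : ∀ k, ‖x k - z‖^2 ≤ 1 * ‖x k - w‖^2 + 0 * (0:ℝ)
        + (2*(M+‖w‖) + ‖z-w‖)*‖z-w‖ := by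
      intro k
      have h1 : ‖x k - z‖ ≤ ‖x k - w‖ + ‖z - w‖ := by
        have he : x k - z = (x k - w) - (z - w) := by abel
        calc ‖x k - z‖ = ‖(x k - w) - (z - w)‖ := by rw [he]
          _ ≤ ‖x k - w‖ + ‖z - w‖ := norm_sub_le _ _
      have h2 : ‖x k - z‖^2 ≤ (‖x k - w‖ + ‖z-w‖)^2 :=
        pow_le_pow_left₀ (norm_nonneg _) h1 2
      have h3 := hxzB w k
      have h4 := norm_nonneg (z - w)
      have h5 := norm_nonneg (x k - w)
      nlinarith
    have h := km_limsup_comb (a := 1) (b := 0) (c := (2*(M+‖w‖) + ‖z-w‖)*‖z-w‖)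
      (u := fun k => ‖x k - w‖^2) (v := fun _ => (0:ℝ))
      (w := fun k => ‖x k - z‖^2) (by norm_num) (le_refl 0)
      hpw (Bv := 0) (hxzB2 w) (fun k => by simp) (hxzB2 z)
    calc F z ≤ 1 * F w + 0 * limsup (fun _ => (0:ℝ)) atTop
          + (2*(M+‖w‖) + ‖z-w‖)*‖z-w‖ := h
      _ = F w + (2*(M+‖w‖) + ‖z-w‖)*‖z-w‖ := by ring
  -- minimize F over C
  set m0 := sInf (F '' C) with hm0def
  have hbdd_below : BddBelow (F '' C) := ⟨0, fun y ⟨z', _, e⟩ => e ▸ hF_nonneg z'⟩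
  have hm0le : ∀ z ∈ C, m0 ≤ F z := fun z hz => csInf_le hbdd_below ⟨z, hz, rfl⟩
  have hzc : ∀ n : ℕ, ∃ z ∈ C, F z < m0 + 1/((n:ℝ)+1) := by
    intro n
    obtain ⟨fz, ⟨z, hz, rfl⟩, hy⟩ := Real.lt_sInf_add_pos (hCne.image F)
      (by positivity : (0:ℝ) < 1/((n:ℝ)+1))
    exact ⟨z, hz, hy⟩
  choose z hzC hzF using hzc
  have hmid_mem : ∀ n p : ℕ, (1/2:ℝ)•(z n + z p) ∈ C := by
    intro n p
    have := hCconv (hzC n) (hzC p) (by norm_num : (0:ℝ) ≤ 1/2) (by norm_num : (0:ℝ) ≤ 1/2)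
      (by norm_num : (1/2:ℝ) + 1/2 = 1)
    rwa [← smul_add] at this
  have hdistz : ∀ n p : ℕ, ‖z n - z p‖^2 ≤ 2*(1/((n:ℝ)+1)) + 2*(1/((p:ℝ)+1)) := by
    intro n p
    have h1 := hSC (z n) (z p)
    have h2 := hm0le _ (hmid_mem n p)
    have h3 := hzF n
    have h4 := hzF p
    linarith
  have hcauchy : CauchySeq z := by
    refine cauchySeq_of_le_tendsto_0 (fun N => Real.sqrt (4/((N:ℝ)+1))) ?_ ?_
    · intro n p N hn hp
      rw [dist_eq_norm]
      have hn' : (1:ℝ)/((n:ℝ)+1) ≤ 1/((N:ℝ)+1) := by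
        apply one_div_le_one_div_of_le (by positivity)
        have : (N:ℝ) ≤ n := Nat.cast_le.2 hn
        linarith
      have hp' : (1:ℝ)/((p:ℝ)+1) ≤ 1/((N:ℝ)+1) := by
        apply one_div_le_one_div_of_le (by positivity)
        have : (N:ℝ) ≤ p := Nat.cast_le.2 hp
        linarith
      have h2 : ‖z n - z p‖^2 ≤ 4/((N:ℝ)+1) := by
        have := hdistz n p
        have e : (4:ℝ)/((N:ℝ)+1) = 2*(1/((N:ℝ)+1)) + 2*(1/((N:ℝ)+1)) := by ring
        rw [e]; linarith
      calc ‖z n - z p‖ = Real.sqrt (‖z n - z p‖^2) := (Real.sqrt_sq (norm_nonneg _)).symm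
        _ ≤ Real.sqrt (4/((N:ℝ)+1)) := Real.sqrt_le_sqrt h2
    · have h1 : Tendsto (fun N : ℕ => 4/((N:ℝ)+1)) atTop (𝓝 0) := by
        have := tendsto_one_div_add_atTop_nhds_zero_nat (𝕜 := ℝ)
        have h2 := this.const_mul (4:ℝ)
        simp only [mul_zero] at h2
        convert h2 using 2 with N
        · ring
      have h3 := (Real.continuous_sqrt.tendsto 0).comp h1
      rwa [Real.sqrt_zero] at h3
  obtain ⟨p0, hp0⟩ := cauchySeq_tendsto_of_complete hcauchy
  have hp0C : p0 ∈ C := hCclosed.mem_of_tendsto hp0 (Filter.Eventually.of_forall hzC)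
  have hFp0 : F p0 ≤ m0 := by
    refine le_of_forall_pos_le_add ?_
    intro ε hε
    set K0 : ℝ := 2*(M+‖p0‖+1)+1 with hK0
    have hK0pos : (0:ℝ) < K0 := by rw [hK0]; positivity
    have h1 : ∀ᶠ n in atTop, ‖p0 - z n‖ < min 1 (ε/(2*K0)) := by
      have htz : Tendsto (fun n => ‖p0 - z n‖) atTop (𝓝 0) := by
        have h1 := tendsto_iff_norm_sub_tendsto_zero.1 hp0
        exact h1.congr (fun n => by rw [norm_sub_rev])
      exact htz.eventually_lt_const (by positivity)
    have h2 : ∀ᶠ n : ℕ in atTop, 1/((n:ℝ)+1) < ε/2 := by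
      exact tendsto_one_div_add_atTop_nhds_zero_nat.eventually_lt_const (by positivity)
    obtain ⟨n, hn1, hn2⟩ := (h1.and h2).exists
    have h3 := hFlip p0 (z n)
    have h4 := hzF n
    have hzn : ‖z n‖ ≤ ‖p0‖ + 1 := by
      have h5 : ‖p0 - z n‖ < 1 := hn1.trans_le (min_le_left _ _)
      calc ‖z n‖ = ‖p0 - (p0 - z n)‖ := by rw [sub_sub_cancel]
        _ ≤ ‖p0‖ + ‖p0 - z n‖ := norm_sub_le _ _
        _ ≤ ‖p0‖ + 1 := by linarith
    have h6 : 2*(M+‖z n‖) + ‖p0 - z n‖ ≤ K0 := by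
      have := hn1.trans_le (min_le_left _ _)
      rw [hK0]; linarith
    have h7 : (2*(M+‖z n‖) + ‖p0 - z n‖)*‖p0 - z n‖ ≤ K0 * (ε/(2*K0)) := by
      apply mul_le_mul h6 (le_of_lt (hn1.trans_le (min_le_right _ _))) (norm_nonneg _)
        (le_of_lt hK0pos)
    have h8 : K0 * (ε/(2*K0)) = ε/2 := by field_simp
    have h9 : F p0 ≤ F (z n) + (2*(M+‖z n‖) + ‖p0 - z n‖)*‖p0 - z n‖ := h3
    linarith
  have hFp0' : F p0 = m0 := le_antisymm hFp0 (hm0le _ hp0C)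
  -- p0 is a fixed point
  have hTp0 : T p0 = p0 := by
    have h1 : F (T p0) ≤ m0 := by rw [← hFp0']; exact hFT p0 hp0C
    have hmid : (1/2:ℝ)•(p0 + T p0) ∈ C := by
      have := hCconv hp0C (hTmaps hp0C) (by norm_num : (0:ℝ) ≤ 1/2)
        (by norm_num : (0:ℝ) ≤ 1/2) (by norm_num : (1/2:ℝ) + 1/2 = 1)
      rwa [← smul_add] at this
    have h2 := hSC p0 (T p0)
    have h3 := hm0le _ hmid
    have h4 : ‖p0 - T p0‖^2 ≤ 0 := by linarith [hFp0']
    have h5 : ‖p0 - T p0‖^2 = 0 := le_antisymm h4 (sq_nonneg _)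
    have h6 : ‖p0 - T p0‖ = 0 := by
      have := pow_eq_zero_iff (n := 2) (by norm_num) |>.1 h5
      exact this
    have h7 : p0 - T p0 = 0 := norm_eq_zero.1 h6
    have := sub_eq_zero.1 h7
    exact this.symm
  -- distances to fixed points are nonincreasing
  have hmono_fix : ∀ p, p ∈ C → T p = p → ∀ k, ‖x (k+1) - p‖ ≤ ‖x k - p‖ := by
    intro p hpC hp k
    have h1 : x (k+1) - p = (1 - α (k+1)) • (x k - p) + α (k+1) • (T (x k) - p) := by
      rw [hx k]; module
    have h2 : ‖T (x k) - p‖ ≤ ‖x k - p‖ := by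
      calc ‖T (x k) - p‖ = ‖T (x k) - T p‖ := by rw [hp]
        _ ≤ ‖x k - p‖ := hT _ (hxC k) _ hpC
    calc ‖x (k+1) - p‖ ≤ ‖(1 - α (k+1)) • (x k - p)‖ + ‖α (k+1) • (T (x k) - p)‖ := by
          rw [h1]; exact norm_add_le _ _
      _ = (1 - α (k+1)) * ‖x k - p‖ + α (k+1) * ‖T (x k) - p‖ := by
          rw [norm_smul, norm_smul, Real.norm_eq_abs, Real.norm_eq_abs,
            abs_of_nonneg (by linarith [(hα (k+1)).2]), abs_of_nonneg (hα (k+1)).1]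
      _ ≤ (1 - α (k+1)) * ‖x k - p‖ + α (k+1) * ‖x k - p‖ := by
          have := mul_le_mul_of_nonneg_left h2 (hα (k+1)).1
          linarith
      _ = ‖x k - p‖ := by ring
  have hconv_fix : ∀ p, p ∈ C → T p = p →
      ∃ r : ℝ, Tendsto (fun k => ‖x k - p‖) atTop (𝓝 r) := by
    intro p hpC hp
    have hanti : Antitone (fun k => ‖x k - p‖) :=
      antitone_nat_of_succ_le (hmono_fix p hpC hp)
    exact ⟨_, tendsto_atTop_ciInf hanti ⟨0, fun r ⟨k, hk⟩ => hk ▸ norm_nonneg _⟩⟩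
  -- asymptotic regularity
  set d : ℕ → ℝ := fun k => ‖x k - T (x k)‖ with hddef
  have hd_mono : ∀ k, d (k+1) ≤ d k := by
    intro k
    have h1 : ∀ w : H, x (k+1) - w = (1 - α (k+1)) • (x k - T (x k)) + (T (x k) - w) := by
      intro w; rw [hx k]; module
    have h2 : x k - x (k+1) = α (k+1) • (x k - T (x k)) := by rw [hx k]; module
    have h3 := hT _ (hxC k) _ (hxC (k+1))
    calc d (k+1)
        ≤ ‖(1 - α (k+1)) • (x k - T (x k))‖ + ‖T (x k) - T (x (k+1))‖ := by
          rw [hddef]; simp only []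
          rw [h1 (T (x (k+1)))]; exact norm_add_le _ _
      _ ≤ (1 - α (k+1)) * ‖x k - T (x k)‖ + ‖x k - x (k+1)‖ := by
          rw [norm_smul, Real.norm_eq_abs, abs_of_nonneg (by linarith [(hα (k+1)).2])]
          linarith
      _ = (1 - α (k+1)) * ‖x k - T (x k)‖ + α (k+1) * ‖x k - T (x k)‖ := by
          rw [h2, norm_smul, Real.norm_eq_abs, abs_of_nonneg (hα (k+1)).1]
      _ = d k := by ring
  have hd_anti : Antitone d := antitone_nat_of_succ_le hd_mono
  have hfej : ∀ k : ℕ, ‖x (k+1) - p0‖^2 ≤ ‖x k - p0‖^2 - α (k+1)*(1-α (k+1))*(d k)^2 := by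
    intro k
    have h1 := hrecsq k p0
    have h2 : ‖T (x k) - p0‖^2 ≤ ‖x k - p0‖^2 := by
      have : ‖T (x k) - p0‖ ≤ ‖x k - p0‖ := by
        calc ‖T (x k) - p0‖ = ‖T (x k) - T p0‖ := by rw [hTp0]
          _ ≤ ‖x k - p0‖ := hT _ (hxC k) _ hp0C
      exact pow_le_pow_left₀ (norm_nonneg _) this 2
    have h4 := mul_le_mul_of_nonneg_left h2 (hα (k+1)).1
    have : (d k)^2 = ‖x k - T (x k)‖^2 := by rw [hddef]
    rw [this]
    linarith
  have hsum0 : ∀ n, (∑ k ∈ Finset.range n, α (k+1)*(1-α (k+1))*(d k)^2)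
      ≤ ‖x 0 - p0‖^2 - ‖x n - p0‖^2 := by
    intro n
    induction n with
    | zero => simp
    | succ n ih =>
      rw [Finset.sum_range_succ]
      have := hfej n
      linarith
  have hd0 : Tendsto d atTop (𝓝 0) := by
    rw [Metric.tendsto_atTop]
    intro ε hε
    set B0 := ‖x 0 - p0‖^2 with hB0
    obtain ⟨N, hN⟩ := eventually_atTop.1 (tendsto_atTop.1 hdivR (B0/ε^2 + 1))
    refine ⟨N, fun n hn => ?_⟩
    rw [Real.dist_eq, sub_zero, abs_of_nonneg (norm_nonneg _)]
    by_contra hcon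
    push_neg at hcon
    have hdk : ∀ k, k ≤ n → ε ≤ d k := fun k hk => le_trans hcon (hd_anti hk)
    have h1 : ∀ k ∈ Finset.range (n+1), α (k+1)*(1-α (k+1))*ε^2
        ≤ α (k+1)*(1-α (k+1))*(d k)^2 := by
      intro k hk
      have hk' : k ≤ n := by
        have := Finset.mem_range.1 hk; omega
      apply mul_le_mul_of_nonneg_left
      · exact pow_le_pow_left₀ (le_of_lt hε) (hdk k hk') 2
      · exact mul_nonneg (hα (k+1)).1 (by linarith [(hα (k+1)).2])
    have h2 : (∑ k ∈ Finset.range (n+1), α (k+1)*(1-α (k+1)))*ε^2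
        ≤ ∑ k ∈ Finset.range (n+1), α (k+1)*(1-α (k+1))*(d k)^2 := by
      rw [Finset.sum_mul]
      exact Finset.sum_le_sum h1
    have h3 := hsum0 (n+1)
    have h4 := hN (n+1) (by omega)
    have h5 : (0:ℝ) ≤ ‖x (n+1) - p0‖^2 := sq_nonneg _
    have h6 : (B0/ε^2 + 1)*ε^2 ≤ (∑ k ∈ Finset.range (n+1), α (k+1)*(1-α (k+1)))*ε^2 :=
      mul_le_mul_of_nonneg_right h4 (sq_nonneg _)
    have h7 : (B0/ε^2 + 1)*ε^2 = B0 + ε^2 := by field_simp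
    nlinarith
  -- ultrafilter limits
  have hUlim : ∀ (𝒰 : Ultrafilter ℕ) (g : ℕ → ℝ) (B : ℝ), (∀ k, |g k| ≤ B) →
      ∃ t : ℝ, Tendsto g (𝒰 : Filter ℕ) (𝓝 t) := by
    intro 𝒰 g B hg
    obtain ⟨t, _, hle⟩ := (isCompact_Icc (a := -B) (b := B)).ultrafilter_le_nhds
      (𝒰.map g) (by
        rw [Ultrafilter.coe_map, le_principal_iff, mem_map]
        exact Filter.univ_mem' (fun k => by
          have := abs_le.1 (hg k); exact ⟨this.1, this.2⟩))
    refine ⟨t, ?_⟩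
    rwa [Ultrafilter.coe_map] at hle
  -- the weak limit along any ultrafilter extending atTop
  have hweak : ∀ (𝒰 : Ultrafilter ℕ), (𝒰 : Filter ℕ) ≤ atTop →
      ∃ y, y ∈ C ∧ T y = y ∧
        ∀ v : H, Tendsto (fun k => (inner ℝ (x k) v : ℝ)) (𝒰 : Filter ℕ) (𝓝 (inner ℝ y v)) := by
    intro 𝒰 h𝒰
    haveI : (𝒰 : Filter ℕ).NeBot := 𝒰.neBot
    have hexists : ∀ v : H, ∃ t : ℝ,
        Tendsto (fun k => (inner ℝ (x k) v : ℝ)) (𝒰 : Filter ℕ) (𝓝 t) := by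
      intro v
      exact hUlim 𝒰 _ (M*‖v‖) (fun k =>
        le_trans (abs_real_inner_le_norm _ _)
          (mul_le_mul_of_nonneg_right (hM k) (norm_nonneg v)))
    choose φ hφlim using hexists
    have hφB : ∀ v, |φ v| ≤ M*‖v‖ := by
      intro v
      have h1 : Tendsto (fun k => |(inner ℝ (x k) v : ℝ)|) (𝒰 : Filter ℕ) (𝓝 |φ v|) :=
        (hφlim v).abs
      exact le_of_tendsto h1 (Filter.Eventually.of_forall (fun k =>
        le_trans (abs_real_inner_le_norm _ _)
          (mul_le_mul_of_nonneg_right (hM k) (norm_nonneg v))))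
    have hadd : ∀ v w, φ (v+w) = φ v + φ w := by
      intro v w
      refine tendsto_nhds_unique (hφlim (v+w)) ?_
      have := (hφlim v).add (hφlim w)
      simpa [inner_add_right] using this
    have hsmul : ∀ (c : ℝ) (v : H), φ (c • v) = c * φ v := by
      intro c v
      refine tendsto_nhds_unique (hφlim (c•v)) ?_
      have := (hφlim v).const_mul c
      simpa [inner_smul_right] using this
    set φL : H →ₗ[ℝ] ℝ :=
      { toFun := φ, map_add' := hadd, map_smul' := fun c v => by simpa using hsmul c v }
      with hφL
    set φCL : H →L[ℝ] ℝ := LinearMap.mkContinuous φL M (fun v => by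
      rw [Real.norm_eq_abs]; simpa [hφL] using hφB v) with hφCL
    set y := (InnerProductSpace.toDual ℝ H).symm φCL with hy
    have hyv : ∀ v, (inner ℝ y v : ℝ) = φ v := by
      intro v
      rw [hy]
      exact InnerProductSpace.toDual_symm_apply
    have hlim : ∀ v, Tendsto (fun k => (inner ℝ (x k) v : ℝ)) (𝒰 : Filter ℕ)
        (𝓝 (inner ℝ y v)) := by
      intro v; rw [hyv v]; exact hφlim v
    -- y ∈ C
    obtain ⟨P, hPC, hPdist⟩ :=
      exists_norm_eq_iInf_of_complete_convex hCne hCclosed.isComplete hCconv y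
    have hPchar := (norm_eq_iInf_iff_real_inner_le_zero hCconv hPC).1 hPdist
    have hyC : y ∈ C := by
      have h1 : ∀ k, (inner ℝ (y - P) (x k - P) : ℝ) ≤ 0 := fun k => hPchar _ (hxC k)
      have h2 : Tendsto (fun k => (inner ℝ (y - P) (x k - P) : ℝ)) (𝒰 : Filter ℕ)
          (𝓝 ((inner ℝ y (y-P) : ℝ) - inner ℝ P (y-P))) := by
        have e : ∀ k, (inner ℝ (y - P) (x k - P) : ℝ)
            = (inner ℝ (x k) (y-P) : ℝ) - (inner ℝ P (y-P) : ℝ) := by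
          intro k
          rw [real_inner_comm, inner_sub_left]
        simp only [e]
        exact (hlim (y-P)).sub tendsto_const_nhds
      have h3 : (inner ℝ y (y-P) : ℝ) - inner ℝ P (y-P) ≤ 0 :=
        le_of_tendsto h2 (Filter.Eventually.of_forall h1)
      have h4 : (inner ℝ (y-P) (y-P) : ℝ) ≤ 0 := by
        rw [inner_sub_left]; linarith
      have h5 : (inner ℝ (y-P) (y-P) : ℝ) = 0 :=
        le_antisymm h4 real_inner_self_nonneg
      have h6 : y - P = 0 := inner_self_eq_zero.1 h5
      have : y = P := sub_eq_zero.1 h6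
      rw [this]; exact hPC
    -- T y = y
    have hdU : Tendsto d (𝒰 : Filter ℕ) (𝓝 0) := hd0.mono_left h𝒰
    obtain ⟨s, hslim⟩ := hUlim 𝒰 (fun k => ‖x k - y‖) (M + ‖y‖) (fun k => by
      rw [abs_of_nonneg (norm_nonneg _)]; exact hxzB y k)
    have hsq : Tendsto (fun k => ‖x k - y‖^2) (𝒰 : Filter ℕ) (𝓝 (s^2)) := hslim.pow 2
    have hmid0 : Tendsto (fun k => (inner ℝ (x k - y) (y - T y) : ℝ)) (𝒰 : Filter ℕ)
        (𝓝 0) := by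
      have e : ∀ k, (inner ℝ (x k - y) (y - T y) : ℝ)
          = (inner ℝ (x k) (y - T y) : ℝ) - (inner ℝ y (y - T y) : ℝ) := by
        intro k; rw [inner_sub_left]
      simp only [e]
      have := (hlim (y - T y)).sub (tendsto_const_nhds (x := (inner ℝ y (y - T y) : ℝ)))
      simpa using this
    have hTy_sq : Tendsto (fun k => ‖x k - T y‖^2) (𝒰 : Filter ℕ)
        (𝓝 (s^2 + 2*0 + ‖y - T y‖^2)) := by
      have e : ∀ k, ‖x k - T y‖^2
          = ‖x k - y‖^2 + 2*(inner ℝ (x k - y) (y - T y) : ℝ) + ‖y - T y‖^2 := by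
        intro k
        have h1 : x k - T y = (x k - y) + (y - T y) := by abel
        rw [h1, norm_add_sq_real]
      simp only [e]
      exact (hsq.add (hmid0.const_mul 2)).add tendsto_const_nhds
    have hub : Tendsto (fun k => (d k + ‖x k - y‖)^2) (𝒰 : Filter ℕ)
        (𝓝 ((0 + s)^2)) := (hdU.add hslim).pow 2
    have hle : ∀ k, ‖x k - T y‖^2 ≤ (d k + ‖x k - y‖)^2 := by
      intro k
      have h1 : ‖x k - T y‖ ≤ d k + ‖x k - y‖ := by
        have h2 : x k - T y = (x k - T (x k)) + (T (x k) - T y) := by abel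
        calc ‖x k - T y‖ ≤ ‖x k - T (x k)‖ + ‖T (x k) - T y‖ := by
              rw [h2]; exact norm_add_le _ _
          _ ≤ d k + ‖x k - y‖ := by
              have := hT _ (hxC k) _ hyC
              rw [hddef]
              linarith
      have h3 : 0 ≤ ‖x k - T y‖ := norm_nonneg _
      exact pow_le_pow_left₀ h3 h1 2
    have hkey : s^2 + 2*0 + ‖y - T y‖^2 ≤ (0 + s)^2 :=
      le_of_tendsto_of_tendsto' hTy_sq hub hle
    have hTy : T y = y := by
      have h1 : ‖y - T y‖^2 ≤ 0 := by nlinarith [hkey]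
      have h2 : ‖y - T y‖^2 = 0 := le_antisymm h1 (sq_nonneg _)
      have h3 : ‖y - T y‖ = 0 := pow_eq_zero_iff (n := 2) (by norm_num) |>.1 h2
      have h4 : y - T y = 0 := norm_eq_zero.1 h3
      exact (sub_eq_zero.1 h4).symm
    exact ⟨y, hyC, hTy, hlim⟩
  -- pick one ultrafilter
  obtain ⟨𝒰0, h𝒰0⟩ := Ultrafilter.exists_le (atTop : Filter ℕ)
  obtain ⟨y0, hy0C, hTy0, hy0lim⟩ := hweak 𝒰0 h𝒰0
  refine ⟨y0, hy0C, hTy0, ?_⟩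
  intro v
  by_contra hcon
  rw [Metric.tendsto_atTop] at hcon
  push_neg at hcon
  obtain ⟨ε, hε, hfreq⟩ := hcon
  have hNeBot : (atTop ⊓ 𝓟 {k | ε ≤ dist (inner ℝ (x k) v : ℝ) (inner ℝ y0 v : ℝ)}).NeBot := by
    apply frequently_iff_neBot.1
    rw [frequently_atTop]
    intro N
    obtain ⟨n, hn, hd⟩ := hfreq N
    exact ⟨n, hn, hd⟩
  obtain ⟨𝒱, h𝒱⟩ := Ultrafilter.exists_le
    (atTop ⊓ 𝓟 {k | ε ≤ dist (inner ℝ (x k) v : ℝ) (inner ℝ y0 v : ℝ)})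
  have h𝒱top : (𝒱 : Filter ℕ) ≤ atTop := h𝒱.trans inf_le_left
  have h𝒱A : ∀ᶠ k in (𝒱 : Filter ℕ),
      ε ≤ dist (inner ℝ (x k) v : ℝ) (inner ℝ y0 v : ℝ) :=
    le_principal_iff.1 (h𝒱.trans inf_le_right)
  obtain ⟨y1, hy1C, hTy1, hy1lim⟩ := hweak 𝒱 h𝒱top
  haveI : (𝒰0 : Filter ℕ).NeBot := 𝒰0.neBot
  haveI : (𝒱 : Filter ℕ).NeBot := 𝒱.neBot
  -- y1 = y0
  have heq : y1 = y0 := by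
    obtain ⟨r0, hr0⟩ := hconv_fix y0 hy0C hTy0
    obtain ⟨r1, hr1⟩ := hconv_fix y1 hy1C hTy1
    have hq : Tendsto (fun k => (inner ℝ (x k) (y0 - y1) : ℝ)) atTop
        (𝓝 ((‖y0‖^2 - ‖y1‖^2 - (r0^2 - r1^2))/2)) := by
      have e : ∀ k, (inner ℝ (x k) (y0 - y1) : ℝ)
          = (‖y0‖^2 - ‖y1‖^2 - (‖x k - y0‖^2 - ‖x k - y1‖^2))/2 := by
        intro k
        have e0 := norm_sub_sq_real (x k) y0
        have e1 := norm_sub_sq_real (x k) y1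
        rw [inner_sub_right]
        linarith
      simp only [e]
      have h1 : Tendsto (fun k => ‖x k - y0‖^2) atTop (𝓝 (r0^2)) := hr0.pow 2
      have h2 : Tendsto (fun k => ‖x k - y1‖^2) atTop (𝓝 (r1^2)) := hr1.pow 2
      have := ((tendsto_const_nhds (x := ‖y0‖^2 - ‖y1‖^2)).sub (h1.sub h2)).div_const 2
      exact this
    have l0 : (inner ℝ y0 (y0-y1) : ℝ) = (‖y0‖^2 - ‖y1‖^2 - (r0^2 - r1^2))/2 :=
      tendsto_nhds_unique (hy0lim _) (hq.mono_left h𝒰0)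
    have l1 : (inner ℝ y1 (y0-y1) : ℝ) = (‖y0‖^2 - ‖y1‖^2 - (r0^2 - r1^2))/2 :=
      tendsto_nhds_unique (hy1lim _) (hq.mono_left h𝒱top)
    have h1 : (inner ℝ (y0-y1) (y0-y1) : ℝ) = 0 := by
      rw [inner_sub_left]; rw [l0, l1]; ring
    have h2 : y0 - y1 = 0 := inner_self_eq_zero.1 h1
    have := sub_eq_zero.1 h2
    exact this.symm
  rw [heq] at hy1lim
  have h2 : Tendsto (fun k => dist (inner ℝ (x k) v : ℝ) (inner ℝ y0 v : ℝ))
      (𝒱 : Filter ℕ) (𝓝 (dist (inner ℝ y0 v : ℝ) (inner ℝ y0 v : ℝ))) :=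
    (hy1lim v).dist tendsto_const_nhds
  rw [dist_self] at h2
  have h3 : ε ≤ 0 := ge_of_tendsto h2 h𝒱A
  linarith
end

section
/- Suppose the fixed point set Fix(T) = {y ∈ C : Ty = y} is nonempty. Then for every n ≥ 1, ‖x_n − T x_n‖ · √(Σ_{i=1}^n α_i(1−α_i)) ≤ dist(x_0, Fix(T)) (in fact the sharper estimate ‖x_{n−1} − T x_{n−1}‖ · √(Σ_{i=1}^n α_i(1−α_i)) ≤ dist(x_0, Fix(T)) holds). -/
open scoped RealInnerProductSpace

lemma km_norm_combo_sq
    {H : Type*} [NormedAddCommGroup H] [InnerProductSpace ℝ H]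
    (a : ℝ) (u v : H) :
    ‖(1 - a) • u + a • v‖ ^ 2
      = (1 - a) * ‖u‖ ^ 2 + a * ‖v‖ ^ 2 - a * (1 - a) * ‖u - v‖ ^ 2 := by
  rw [← real_inner_self_eq_norm_sq, ← real_inner_self_eq_norm_sq,
    ← real_inner_self_eq_norm_sq, ← real_inner_self_eq_norm_sq]
  simp only [inner_add_left, inner_add_right, inner_sub_left, inner_sub_right,
    real_inner_smul_left, real_inner_smul_right, real_inner_comm v u]
  ring

/-- In a Hilbert space, if `Fix(T) ≠ ∅`, then for every `n ≥ 1` the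
Krasnosel'skii–Mann iterates satisfy
`‖x_n − T x_n‖ · √(Σ_{i=1}^n α_i(1−α_i)) ≤ dist(x_0, Fix T)`, and in fact the
sharper estimate with `x_{n−1}` in place of `x_n` holds. -/
theorem km_fixed_point_bound
    {H : Type*} [NormedAddCommGroup H] [InnerProductSpace ℝ H]
    (C : Set H) (hCne : C.Nonempty) (hCconv : Convex ℝ C)
    (T : H → H) (hTmaps : Set.MapsTo T C C)
    (hT : ∀ x ∈ C, ∀ y ∈ C, ‖T x - T y‖ ≤ ‖x - y‖)
    (α : ℕ → ℝ) (hα : ∀ k, α k ∈ Set.Icc (0:ℝ) 1)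
    (x : ℕ → H) (hx0 : x 0 ∈ C)
    (hx : ∀ k, x (k + 1) = (1 - α (k + 1)) • x k + α (k + 1) • T (x k))
    (hfix : ∃ y ∈ C, T y = y)
    (n : ℕ) (hn : 1 ≤ n) :
    ‖x n - T (x n)‖ * Real.sqrt (∑ i ∈ Finset.Icc 1 n, α i * (1 - α i))
        ≤ Metric.infDist (x 0) {y | y ∈ C ∧ T y = y} ∧
    ‖x (n - 1) - T (x (n - 1))‖ * Real.sqrt (∑ i ∈ Finset.Icc 1 n, α i * (1 - α i))
        ≤ Metric.infDist (x 0) {y | y ∈ C ∧ T y = y} := by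
  set r : ℕ → ℝ := fun k => ‖x k - T (x k)‖ with hr_def
  -- membership of iterates in C
  have hmem : ∀ k, x k ∈ C := by
    intro k
    induction k with
    | zero => exact hx0
    | succ k ih =>
      rw [hx k]
      exact hCconv ih (hTmaps ih) (sub_nonneg.2 (hα (k+1)).2) (hα (k+1)).1 (by ring)
  -- residuals are nonincreasing
  have hrsucc : ∀ k, r (k + 1) ≤ r k := by
    intro k
    have h1 : x (k+1) - T (x (k+1))
        = (1 - α (k+1)) • (x k - T (x k)) + (T (x k) - T (x (k+1))) := by
      rw [hx k]; module
    have h2 : ‖T (x k) - T (x (k+1))‖ ≤ ‖x k - x (k+1)‖ :=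
      hT _ (hmem k) _ (hmem (k+1))
    have h3 : x k - x (k+1) = (α (k+1)) • (x k - T (x k)) := by
      rw [hx k]; module
    have h4 : ‖x k - x (k+1)‖ = α (k+1) * r k := by
      rw [h3, norm_smul, Real.norm_eq_abs, abs_of_nonneg (hα (k+1)).1]
    calc r (k+1) = ‖(1 - α (k+1)) • (x k - T (x k)) + (T (x k) - T (x (k+1)))‖ := by
          rw [hr_def]; simp [h1]
      _ ≤ ‖(1 - α (k+1)) • (x k - T (x k))‖ + ‖T (x k) - T (x (k+1))‖ := norm_add_le _ _
      _ ≤ (1 - α (k+1)) * r k + α (k+1) * r k := by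
          refine add_le_add ?_ (h2.trans_eq h4)
          rw [norm_smul, Real.norm_eq_abs, abs_of_nonneg (sub_nonneg.2 (hα (k+1)).2)]
      _ = r k := by ring
  have hrmono : ∀ i j, i ≤ j → r j ≤ r i := fun i j h =>
    (antitone_nat_of_succ_le hrsucc) h
  have hrnn : ∀ k, 0 ≤ r k := fun k => norm_nonneg _
  -- the set of fixed points
  obtain ⟨y₀, hy₀C, hy₀fix⟩ := hfix
  have hSne : ({y | y ∈ C ∧ T y = y} : Set H).Nonempty := ⟨y₀, hy₀C, hy₀fix⟩
  have hSnorm : Real.sqrt (∑ i ∈ Finset.Icc 1 n, α i * (1 - α i)) ≥ 0 :=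
    Real.sqrt_nonneg _
  -- main bound for each fixed point
  have key : ∀ y ∈ ({y | y ∈ C ∧ T y = y} : Set H),
      r (n - 1) * Real.sqrt (∑ i ∈ Finset.Icc 1 n, α i * (1 - α i))
        ≤ dist (x 0) y := by
    rintro y ⟨hyC, hyfix⟩
    -- one-step inequality
    have step : ∀ k, ‖x (k+1) - y‖ ^ 2 + α (k+1) * (1 - α (k+1)) * r k ^ 2
        ≤ ‖x k - y‖ ^ 2 := by
      intro k
      have hdecomp : x (k+1) - y
          = (1 - α (k+1)) • (x k - y) + (α (k+1)) • (T (x k) - y) := by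
        rw [hx k]; module
      have hq : ‖x (k+1) - y‖ ^ 2
          = (1 - α (k+1)) * ‖x k - y‖ ^ 2 + α (k+1) * ‖T (x k) - y‖ ^ 2
            - α (k+1) * (1 - α (k+1)) * ‖(x k - y) - (T (x k) - y)‖ ^ 2 := by
        rw [hdecomp, km_norm_combo_sq]
      have hTle : ‖T (x k) - y‖ ≤ ‖x k - y‖ := by
        have := hT _ (hmem k) _ hyC
        rwa [hyfix] at this
      have hTsq : ‖T (x k) - y‖ ^ 2 ≤ ‖x k - y‖ ^ 2 :=
        pow_le_pow_left₀ (norm_nonneg _) hTle 2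
      have hsimp : (x k - y) - (T (x k) - y) = x k - T (x k) := by abel
      rw [hq, hsimp]
      have := (hα (k+1)).1
      nlinarith [hrnn k]
    -- telescoping
    have tele : ∀ m, (∑ i ∈ Finset.Icc 1 m, α i * (1 - α i) * r (i - 1) ^ 2)
        + ‖x m - y‖ ^ 2 ≤ ‖x 0 - y‖ ^ 2 := by
      intro m
      induction m with
      | zero => simp
      | succ m ih =>
        rw [Finset.sum_Icc_succ_top (Nat.le_add_left 1 m)]
        have := step m
        simp only [Nat.add_sub_cancel]
        nlinarith [this, ih]
    -- compare residuals
    have hcomp : (∑ i ∈ Finset.Icc 1 n, α i * (1 - α i)) * r (n - 1) ^ 2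
        ≤ ∑ i ∈ Finset.Icc 1 n, α i * (1 - α i) * r (i - 1) ^ 2 := by
      rw [Finset.sum_mul]
      refine Finset.sum_le_sum ?_
      intro i hi
      rw [Finset.mem_Icc] at hi
      have hri : r (n - 1) ≤ r (i - 1) :=
        hrmono _ _ (Nat.sub_le_sub_right hi.2 1)
      have h1 : r (n - 1) ^ 2 ≤ r (i - 1) ^ 2 :=
        pow_le_pow_left₀ (hrnn _) hri 2
      have h2 : 0 ≤ α i * (1 - α i) :=
        mul_nonneg (hα i).1 (sub_nonneg.2 (hα i).2)
      nlinarith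
    have hfinal : r (n - 1) ^ 2 * (∑ i ∈ Finset.Icc 1 n, α i * (1 - α i))
        ≤ ‖x 0 - y‖ ^ 2 := by
      have := tele n
      nlinarith [sq_nonneg (‖x n - y‖)]
    calc r (n - 1) * Real.sqrt (∑ i ∈ Finset.Icc 1 n, α i * (1 - α i))
        = Real.sqrt (r (n - 1) ^ 2 * (∑ i ∈ Finset.Icc 1 n, α i * (1 - α i))) := by
          rw [Real.sqrt_mul (sq_nonneg _), Real.sqrt_sq (hrnn _)]
      _ ≤ Real.sqrt (‖x 0 - y‖ ^ 2) := Real.sqrt_le_sqrt hfinal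
      _ = ‖x 0 - y‖ := Real.sqrt_sq (norm_nonneg _)
      _ = dist (x 0) y := (dist_eq_norm _ _).symm
  have key' : r (n - 1) * Real.sqrt (∑ i ∈ Finset.Icc 1 n, α i * (1 - α i))
      ≤ Metric.infDist (x 0) {y | y ∈ C ∧ T y = y} := by
    have hb : 0 ≤ r (n - 1) * Real.sqrt (∑ i ∈ Finset.Icc 1 n, α i * (1 - α i)) :=
      mul_nonneg (hrnn _) hSnorm
    have hE : ENNReal.ofReal (r (n - 1) * Real.sqrt (∑ i ∈ Finset.Icc 1 n, α i * (1 - α i)))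
        ≤ Metric.infEDist (x 0) {y | y ∈ C ∧ T y = y} := by
      rw [Metric.le_infEDist]
      intro z hz
      rw [edist_dist]
      exact ENNReal.ofReal_le_ofReal (key z hz)
    have := ENNReal.toReal_mono (Metric.infEDist_ne_top hSne) hE
    rwa [ENNReal.toReal_ofReal hb] at this
  refine ⟨?_, key'⟩
  have hrn : r n ≤ r (n - 1) := hrmono _ _ (Nat.sub_le n 1)
  calc r n * Real.sqrt (∑ i ∈ Finset.Icc 1 n, α i * (1 - α i))
      ≤ r (n - 1) * Real.sqrt (∑ i ∈ Finset.Icc 1 n, α i * (1 - α i)) :=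
        mul_le_mul_of_nonneg_right hrn hSnorm
    _ ≤ _ := key'
end

section
/- For every k ∈ ℕ, the Catalan number C_k = (1/(k+1)) · binom(2k, k) satisfies C_k = Σ_{j=0}^k (−1)^j · 2^{k−j} · binom(k, j) · binom(j, ⌊j/2⌋). -/
open Finset

/-- Summand of the Catalan identity, with exact rational powers. -/
def fqCat (k j : ℕ) : ℚ :=
  (-1) ^ j * (2 ^ k / 2 ^ j) * (k.choose j : ℚ) * (j.choose (j / 2) : ℚ)

/-- WZ-style certificate for the Catalan identity. -/
def gqCat (k j : ℕ) : ℚ :=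
  if j = 0 then 0
  else if j % 2 = 1 then
    -(2 ^ (k + 2) / 2 ^ j) * ((k : ℚ) + 1 - 2 * j) * (k.choose (j - 1) : ℚ)
      * ((j - 1).choose ((j - 1) / 2) : ℚ)
  else
    (2 ^ (k + 1) / 2 ^ j) * ((k : ℚ) - 2 * j) * (k.choose (j - 1) : ℚ)
      * (j.choose (j / 2) : ℚ)

lemma fq_even (k m : ℕ) :
    fqCat k (2 * m) = 2 ^ k / 2 ^ (2 * m) * (k.choose (2 * m) : ℚ) * ((2 * m).choose m : ℚ) := by
  unfold fqCat
  rw [show (2 * m) / 2 = m by omega, show ((-1 : ℚ)) ^ (2 * m) = 1 from Even.neg_one_pow ⟨m, by ring⟩]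
  ring

lemma fq_odd (k m : ℕ) :
    fqCat k (2 * m + 1)
      = -(2 ^ k / 2 ^ (2 * m + 1) * (k.choose (2 * m + 1) : ℚ) * ((2 * m + 1).choose m : ℚ)) := by
  unfold fqCat
  rw [show (2 * m + 1) / 2 = m by omega,
    show ((-1 : ℚ)) ^ (2 * m + 1) = -1 from Odd.neg_one_pow ⟨m, by ring⟩]
  ring

lemma gq_odd (k m : ℕ) :
    gqCat k (2 * m + 1)
      = -(2 ^ (k + 2) / 2 ^ (2 * m + 1)) * ((k : ℚ) + 1 - 2 * (2 * m + 1))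
          * (k.choose (2 * m) : ℚ) * ((2 * m).choose m : ℚ) := by
  unfold gqCat
  rw [if_neg (by omega), if_pos (by omega : (2 * m + 1) % 2 = 1),
    show 2 * m + 1 - 1 = 2 * m by omega, show (2 * m) / 2 = m by omega]
  push_cast
  ring

lemma gq_even (k m : ℕ) :
    gqCat k (2 * m + 2)
      = (2 ^ (k + 1) / 2 ^ (2 * m + 2)) * ((k : ℚ) - 2 * (2 * m + 2))
          * (k.choose (2 * m + 1) : ℚ) * ((2 * m + 2).choose (m + 1) : ℚ) := by
  unfold gqCat
  rw [if_neg (by omega), if_neg (by omega : ¬ (2 * m + 2) % 2 = 1),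
    show 2 * m + 2 - 1 = 2 * m + 1 by omega, show (2 * m + 2) / 2 = m + 1 by omega]
  push_cast
  ring

lemma absorbQ (k j : ℕ) (h : j ≤ k) :
    ((j : ℚ) + 1) * (k.choose (j + 1) : ℚ) = ((k : ℚ) - j) * (k.choose j : ℚ) := by
  have hc := Nat.choose_succ_right_eq k j
  have hc2 : ((k.choose (j + 1) * (j + 1) : ℕ) : ℚ) = ((k.choose j * (k - j) : ℕ) : ℚ) := by
    rw [hc]
  push_cast [Nat.cast_sub h] at hc2
  linarith [hc2]

lemma centralQ (m : ℕ) :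
    ((m : ℚ) + 1) * ((2 * m + 1).choose m : ℚ) = (2 * (m : ℚ) + 1) * ((2 * m).choose m : ℚ) := by
  have h := Nat.add_one_mul_choose_eq (2 * m) m
  have hc : (((2 * m).succ * (2 * m).choose m : ℕ) : ℚ)
      = (((2 * m).succ.choose m.succ * m.succ : ℕ) : ℚ) := by simp only [Nat.succ_eq_add_one, h]
  rw [show (2 * m).succ.choose m.succ = (2 * m + 1).choose (m + 1) from rfl,
    Nat.choose_symm_half m] at hc
  push_cast at hc
  linarith [hc]

lemma doubleQ (m : ℕ) :
    ((2 * m + 2).choose (m + 1) : ℚ) = 2 * ((2 * m + 1).choose m : ℚ) := by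
  have h : (2 * m + 2).choose (m + 1) = (2 * m + 1).choose m + (2 * m + 1).choose (m + 1) :=
    Nat.choose_succ_succ _ _
  rw [Nat.choose_symm_half m] at h
  rw [h]
  push_cast
  ring

lemma pascalQ (k j : ℕ) :
    ((k + 1).choose (j + 1) : ℚ) = (k.choose j : ℚ) + (k.choose (j + 1) : ℚ) := by
  rw [Nat.choose_succ_succ k j]
  push_cast
  ring

/-- The key cancellation in the odd case (requires cancelling `m + 1`). -/
lemma keyOdd (k m : ℕ) (h : 2 * m ≤ k) :
    (8 * (m : ℚ) + 6) * (k.choose (2 * m + 1) : ℚ) * ((2 * m + 1).choose m : ℚ)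
      = (2 * (k : ℚ) + 4) * (k.choose (2 * m) : ℚ) * ((2 * m + 1).choose m : ℚ)
        + 4 * ((k : ℚ) - 4 * m - 1) * (k.choose (2 * m) : ℚ) * ((2 * m).choose m : ℚ) := by
  have hm : ((m : ℚ) + 1) ≠ 0 := by positivity
  apply mul_left_cancel₀ hm
  have hR1 : ((2 * (m : ℚ)) + 1) * (k.choose (2 * m + 1) : ℚ)
      = ((k : ℚ) - 2 * m) * (k.choose (2 * m) : ℚ) := by
    have := absorbQ k (2 * m) h
    push_cast at this ⊢
    linarith [this]
  have hR2 := centralQ m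
  linear_combination (2 * (4 * (m : ℚ) + 3) * ((2 * m).choose m : ℚ)) * hR1
    + ((8 * (m : ℚ) + 6) * (k.choose (2 * m + 1) : ℚ)
        - (2 * (k : ℚ) + 4) * (k.choose (2 * m) : ℚ)) * hR2

lemma stepCat (k j : ℕ) (hj : j ≤ k + 1) :
    ((k : ℚ) + 2) * fqCat (k + 1) j - (4 * k + 2) * fqCat k j
      = gqCat k (j + 1) - gqCat k j := by
  rcases Nat.even_or_odd j with ⟨m, rfl⟩ | ⟨m, rfl⟩
  · -- j even
    rw [show m + m = 2 * m by ring]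
    rcases m with _ | n
    · -- j = 0
      simp only [Nat.mul_zero, fqCat, gqCat]
      norm_num
      ring
    · -- j = 2n + 2
      have h2n1 : 2 * n + 1 ≤ k := by omega
      rw [show 2 * (n + 1) = 2 * (n + 1) from rfl]
      rw [show (2 * (n + 1) : ℕ) = 2 * n + 2 by ring] -- normalize index
      rw [show (2 * n + 2 : ℕ) + 1 = 2 * (n + 1) + 1 by ring]
      rw [gq_odd k (n + 1)]
      rw [show (2 * n + 2 : ℕ) = 2 * n + 2 from rfl]
      rw [show (2 * n + 2 : ℕ) = 2 * (n + 1) by ring, fq_even (k + 1) (n + 1), fq_even k (n + 1),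
        show (2 * (n + 1) : ℕ) = 2 * n + 2 by ring, gq_even k n]
      have hP := pascalQ k (2 * n + 1)
      have hA : ((2 * n + 1 : ℚ) + 1) * (k.choose (2 * n + 2) : ℚ)
          = ((k : ℚ) - (2 * n + 1)) * (k.choose (2 * n + 1) : ℚ) := by
        have := absorbQ k (2 * n + 1) h2n1
        push_cast at this ⊢
        linarith [this]
      push_cast at hP hA ⊢
      linear_combination ((2 : ℚ) ^ k / 2 ^ (2 * n + 2))
          * (2 * ((k : ℚ) + 2) * ((2 * n + 2).choose (n + 1) : ℚ)) * hP
        - ((2 : ℚ) ^ k / 2 ^ (2 * n + 2)) * (4 * ((2 * n + 2).choose (n + 1) : ℚ)) * hA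
  · -- j = 2m + 1
    have h2m : 2 * m ≤ k := by omega
    rw [fq_odd (k + 1) m, fq_odd k m, gq_odd k m,
      show (2 * m + 1 : ℕ) + 1 = 2 * m + 2 by ring, gq_even k m]
    have hP := pascalQ k (2 * m)
    have hF := doubleQ m
    have hK := keyOdd k m h2m
    push_cast at hP hF hK ⊢
    linear_combination (-((2 : ℚ) ^ k / 2 ^ (2 * m + 1)) * (2 * ((k : ℚ) + 2)
          * ((2 * m + 1).choose m : ℚ))) * hP
      - ((2 : ℚ) ^ k / 2 ^ (2 * m + 1)) * (((k : ℚ) - 4 * m - 4)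
          * (k.choose (2 * m + 1) : ℚ)) * hF
      + ((2 : ℚ) ^ k / 2 ^ (2 * m + 1)) * hK


lemma fq_def (k j : ℕ) :
    fqCat k j = (-1) ^ j * (2 ^ k / 2 ^ j) * (k.choose j : ℚ) * (j.choose (j / 2) : ℚ) := rfl

lemma gq_zero (k : ℕ) : gqCat k 0 = 0 := rfl

lemma gq_top (k : ℕ) : gqCat k (k + 2) = 0 := by
  unfold gqCat
  rw [if_neg (by omega)]
  rcases Nat.even_or_odd k with ⟨m, rfl⟩ | ⟨m, rfl⟩
  · rw [if_neg (by omega), show m + m + 2 - 1 = (m + m) + 1 by omega]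
    simp [Nat.choose_succ_self]
  · rw [if_pos (by omega), show 2 * m + 1 + 2 - 1 = (2 * m + 1) + 1 by omega]
    simp [Nat.choose_succ_self]

/-- **An identity for Catalan numbers.** For every `k`,
`C_k = (1/(k+1)) C(2k,k) = Σ_{j=0}^k (−1)^j 2^{k−j} C(k,j) C(j, ⌊j/2⌋)`. -/
theorem catalan_identity (k : ℕ) :
    ((2 * k).choose k : ℚ) / (k + 1)
      = ∑ j ∈ Finset.range (k + 1),
          (-1) ^ j * 2 ^ (k - j) * (k.choose j : ℚ) * (j.choose (j / 2) : ℚ) := by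
  have hrec : ∀ n : ℕ, ((n : ℚ) + 2) * ∑ j ∈ range (n + 2), fqCat (n + 1) j
      = (4 * n + 2) * ∑ j ∈ range (n + 1), fqCat n j := by
    intro n
    have htel : ∑ j ∈ range (n + 2), (gqCat n (j + 1) - gqCat n j)
        = gqCat n (n + 2) - gqCat n 0 := Finset.sum_range_sub _ _
    have hstep : ∑ j ∈ range (n + 2),
        (((n : ℚ) + 2) * fqCat (n + 1) j - (4 * n + 2) * fqCat n j)
        = gqCat n (n + 2) - gqCat n 0 := by
      rw [← htel]
      exact Finset.sum_congr rfl fun j hj => stepCat n j (by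
        have := Finset.mem_range.mp hj; omega)
    rw [Finset.sum_sub_distrib, ← Finset.mul_sum, ← Finset.mul_sum, gq_zero, gq_top,
      Finset.sum_range_succ (fun j => fqCat n j) (n + 1)] at hstep
    have hextra : fqCat n (n + 1) = 0 := by
      rw [fq_def]; simp [Nat.choose_succ_self]
    rw [hextra] at hstep
    linarith [hstep]
  have main : ∀ n : ℕ, ∑ j ∈ range (n + 1), fqCat n j = ((2 * n).choose n : ℚ) / (n + 1) := by
    intro n
    induction n with
    | zero => rw [Finset.sum_range_one, fq_def]; norm_num
    | succ n ih =>
      have h1 := hrec n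
      rw [ih] at h1
      have hcb := Nat.succ_mul_centralBinom_succ n
      simp only [Nat.centralBinom] at hcb
      have hcbq : ((n : ℚ) + 1) * ((2 * (n + 1)).choose (n + 1) : ℚ)
          = 2 * (2 * n + 1) * ((2 * n).choose n : ℚ) := by exact_mod_cast hcb
      have hne1 : ((n : ℚ) + 1) ≠ 0 := by positivity
      have hne2 : ((n : ℚ) + 2) ≠ 0 := by positivity
      rw [show ((n : ℕ) + 1 + 1) = n + 2 from rfl] at h1 ⊢
      push_cast
      rw [eq_div_iff (show ((n : ℚ) + 1 + 1) ≠ 0 by positivity)]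
      apply mul_left_cancel₀ hne1
      field_simp at h1
      push_cast at h1 hcbq ⊢
      linear_combination h1 - hcbq
  rw [← main k]
  apply Finset.sum_congr rfl
  intro j hj
  have hjk : j ≤ k := by have := Finset.mem_range.mp hj; omega
  rw [fq_def, show (2:ℚ)^(k-j) = 2^k/2^j from by
    rw [eq_div_iff (by positivity : ((2:ℚ)^j) ≠ 0), ← pow_add, Nat.sub_add_cancel hjk]]
end
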